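/- With the analysis filter kernels H̄_LP = (1/2)(I_N + Ψ) and H̄_HP = I_N - H̄_LP, the combined analysis-sampling operator satisfies S̄_uLP S̄_dLP H̄_LP + S̄_uHP S̄_dHP H̄_HP = I_N + J_N Ψ. -/

import Mathlib

open Matrix

/-- The `n × n` exchange (counter-identity) matrix, with ones on the anti-diagonal. -/
noncomputable def exchMat (n : ℕ) : Matrix (Fin n) (Fin n) ℝ :=
  Matrix.of fun i j => if (i : ℕ) + (j : ℕ) = n - 1 then (1 : ℝ) else 0


lemma exchMat_transpose (n : ℕ) : (exchMat n)ᵀ = exchMat n := by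
  ext i j; simp [exchMat, Matrix.transpose_apply, Nat.add_comm]

lemma exchMat_mul_self (n : ℕ) : exchMat n * exchMat n = 1 := by
  ext i j
  simp only [Matrix.mul_apply, exchMat, Matrix.of_apply, Matrix.one_apply]
  rw [Finset.sum_eq_single ⟨n - 1 - (i:ℕ), by omega⟩]
  · have hi := i.isLt
    by_cases hij : i = j
    · subst hij; simp only [if_pos rfl]; rw [if_pos (by omega), if_pos (by omega)]; simp
    · have hne : (i:ℕ) ≠ (j:ℕ) := fun hc => hij (Fin.ext hc)
      rw [if_neg (show ¬(n - 1 - (i:ℕ) + (j:ℕ) = n - 1) by omega), if_neg hij]; ring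
  · intro b _ hb
    have : (b:ℕ) ≠ n - 1 - (i:ℕ) := fun hc => hb (Fin.ext hc)
    have : ¬ ((i:ℕ) + (b:ℕ) = n - 1) := by omega
    simp [this]
  · intro hc; exact absurd (Finset.mem_univ _) hc

lemma exchMat_eq_blocks (N : ℕ) (h : N / 2 + N / 2 = N) :
    exchMat N = (fromBlocks (0 : Matrix (Fin (N/2)) (Fin (N/2)) ℝ) (exchMat (N/2))
      (exchMat (N/2)) 0).submatrix
      ((finSumFinEquiv.trans (finCongr h)).symm) ((finSumFinEquiv.trans (finCongr h)).symm) := by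
  ext i j
  rcases (finSumFinEquiv.trans (finCongr h)).surjective i with ⟨a, rfl⟩
  rcases (finSumFinEquiv.trans (finCongr h)).surjective j with ⟨b, rfl⟩
  simp only [Matrix.submatrix_apply, Equiv.symm_apply_apply]
  have ha2 : N / 2 ≤ N := by omega
  rcases a with a | a <;> rcases b with b | b <;>
    simp [exchMat, finSumFinEquiv, Fin.ext_iff, fromBlocks] <;>
    (try (have ha := a.isLt; have hb := b.isLt)) <;>
    first
      | omega
      | (split_ifs <;> first | rfl | omega)

/-- The low-pass downsampling matrix `S̄_dLP = [I_{N/2}  J_{N/2}]`, an `(N/2) × N` block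
matrix (columns reindexed from `Fin (N/2) ⊕ Fin (N/2)` to `Fin N`). -/
noncomputable def SdLP (N : ℕ) (h : N / 2 + N / 2 = N) :
    Matrix (Fin (N / 2)) (Fin N) ℝ :=
  (Matrix.fromCols (1 : Matrix (Fin (N / 2)) (Fin (N / 2)) ℝ)
    (exchMat (N / 2))).submatrix id (finSumFinEquiv.trans (finCongr h)).symm

/-- The high-pass downsampling matrix `S̄_dHP = [I_{N/2}  -J_{N/2}]`. -/
noncomputable def SdHP (N : ℕ) (h : N / 2 + N / 2 = N) :
    Matrix (Fin (N / 2)) (Fin N) ℝ :=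
  (Matrix.fromCols (1 : Matrix (Fin (N / 2)) (Fin (N / 2)) ℝ)
    (-exchMat (N / 2))).submatrix id (finSumFinEquiv.trans (finCongr h)).symm


lemma gram_LP (N : ℕ) (h : N / 2 + N / 2 = N) :
    (SdLP N h)ᵀ * SdLP N h = 1 + exchMat N := by
  set e := (finSumFinEquiv.trans (finCongr h)).symm with he
  set C := Matrix.fromCols (1 : Matrix (Fin (N / 2)) (Fin (N / 2)) ℝ) (exchMat (N / 2)) with hC
  have h1 : (SdLP N h)ᵀ * SdLP N h = (Cᵀ * C).submatrix e e := by
    rw [Matrix.submatrix_mul Cᵀ C ⇑e id ⇑e Function.bijective_id]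
    rfl
  rw [h1, hC, transpose_fromCols, fromRows_mul_fromCols, Matrix.transpose_one,
    exchMat_transpose, exchMat_mul_self]
  simp only [Matrix.one_mul, Matrix.mul_one]
  rw [show (fromBlocks (1 : Matrix (Fin (N/2)) (Fin (N/2)) ℝ) (exchMat (N/2)) (exchMat (N/2)) 1)
      = 1 + fromBlocks 0 (exchMat (N/2)) (exchMat (N/2)) 0 by
        ext (i|i) (j|j) <;> simp [Matrix.fromBlocks, Matrix.one_apply]]
  simp only [Matrix.submatrix_add, Pi.add_apply, Matrix.submatrix_one_equiv e,
    ← exchMat_eq_blocks N h]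
  rw [exchMat_eq_blocks N h]

lemma gram_HP (N : ℕ) (h : N / 2 + N / 2 = N) :
    (SdHP N h)ᵀ * SdHP N h = 1 - exchMat N := by
  set e := (finSumFinEquiv.trans (finCongr h)).symm with he
  set C := Matrix.fromCols (1 : Matrix (Fin (N / 2)) (Fin (N / 2)) ℝ) (-exchMat (N / 2)) with hC
  have h1 : (SdHP N h)ᵀ * SdHP N h = (Cᵀ * C).submatrix e e := by
    rw [Matrix.submatrix_mul Cᵀ C ⇑e id ⇑e Function.bijective_id]
    rfl
  have hJJ : (-exchMat (N/2))ᵀ * (-exchMat (N/2)) = 1 := by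
    rw [Matrix.transpose_neg, exchMat_transpose, neg_mul_neg, exchMat_mul_self]
  rw [h1, hC, transpose_fromCols, fromRows_mul_fromCols, Matrix.transpose_one,
    hJJ, Matrix.transpose_neg, exchMat_transpose]
  simp only [Matrix.one_mul, Matrix.mul_one]
  rw [show (fromBlocks (1 : Matrix (Fin (N/2)) (Fin (N/2)) ℝ) (-exchMat (N/2)) (-exchMat (N/2)) 1)
      = 1 - fromBlocks 0 (exchMat (N/2)) (exchMat (N/2)) 0 by
        ext (i|i) (j|j) <;> simp [Matrix.fromBlocks, Matrix.one_apply]]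
  simp only [Matrix.submatrix_sub, Pi.sub_apply, Matrix.submatrix_one_equiv e,
    ← exchMat_eq_blocks N h]
  rw [exchMat_eq_blocks N h]

/-- With `H̄_LP = (1/2)(I_N + Ψ)` and `H̄_HP = I_N - H̄_LP`, the combined
analysis-sampling operator satisfies
`S̄_uLP S̄_dLP H̄_LP + S̄_uHP S̄_dHP H̄_HP = I_N + J_N Ψ`. -/
theorem stmt10 (N : ℕ) (hN : 0 < N) (hNe : Even N) (h : N / 2 + N / 2 = N)
    (ψ : Fin N → ℝ) :
    (SdLP N h)ᵀ * SdLP N h *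
        ((1 / 2 : ℝ) • ((1 : Matrix (Fin N) (Fin N) ℝ) + Matrix.diagonal ψ)) +
      (SdHP N h)ᵀ * SdHP N h *
        ((1 : Matrix (Fin N) (Fin N) ℝ) -
          (1 / 2 : ℝ) • ((1 : Matrix (Fin N) (Fin N) ℝ) + Matrix.diagonal ψ)) =
      (1 : Matrix (Fin N) (Fin N) ℝ) + exchMat N * Matrix.diagonal ψ := by
  rw [gram_LP, gram_HP]
  set J := exchMat N
  set D := Matrix.diagonal ψ
  have h2 : (1 : Matrix (Fin N) (Fin N) ℝ) - (1/2 : ℝ) • (1 + D) = (1/2 : ℝ) • (1 - D) := by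
    rw [smul_add, smul_sub]
    have : (1 : Matrix (Fin N) (Fin N) ℝ) = (1/2 : ℝ) • (1 : Matrix (Fin N) (Fin N) ℝ)
        + (1/2 : ℝ) • (1 : Matrix (Fin N) (Fin N) ℝ) := by
      rw [← add_smul]; norm_num
    nth_rewrite 1 [this]
    abel
  rw [h2, Matrix.mul_smul, Matrix.mul_smul, ← smul_add]
  have h3 : (1 + J) * (1 + D) + (1 - J) * (1 - D)
      = (2 : ℝ) • (1 + J * D) := by
    rw [add_mul, sub_mul]
    simp only [Matrix.one_mul, Matrix.mul_add, Matrix.mul_sub, Matrix.mul_one]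
    module
  rw [h3, smul_smul]
  norm_num
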